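/- Let w : 𝕋 → ℝ be positive with log w integrable, and define the Szegő function D(z,μ) = exp((1/2)∫_𝕋 (ζ+z)/(ζ-z) · log w(ζ) dm(ζ)) for |z| < 1. If w_t(ζ) = c(t)·exp(t(ζ+ζ^{-1}))·w(ζ) with c(t) > 0 chosen so ∫ w_t dm = 1, then D(z, μ_t) = √(c(t))·e^{tz}·D(z, μ₀) for |z|<1; in particular the ratios D(z,μ_t)/D(0,μ_t) satisfy D(z,μ_t)/D(0,μ_t) = e^{tz}·D(z,μ₀)/D(0,μ₀). -/

import Mathlib

open Complex

open MeasureTheory intervalIntegral in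
noncomputable def szK (z : ℂ) (x : ℝ) : ℂ :=
  (Complex.exp ((x : ℂ) * Complex.I) + z) / (Complex.exp ((x : ℂ) * Complex.I) - z)

lemma abs_exp_neg_xI (x : ℝ) : ‖Complex.exp (-(x:ℂ) * Complex.I)‖ = 1 := by
  have := Complex.norm_exp_ofReal_mul_I (-x)
  simpa using this

lemma denom_ne {z : ℂ} (hz : ‖z‖ < 1) (x : ℝ) :
    Complex.exp ((x:ℂ) * Complex.I) - z ≠ 0 := by
  intro h
  rw [sub_eq_zero] at h
  have h1 : ‖Complex.exp ((x:ℂ) * Complex.I)‖ = 1 :=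
    Complex.norm_exp_ofReal_mul_I x
  rw [← h] at hz
  rw [h1] at hz
  exact lt_irrefl 1 hz

lemma re_pos_one_sub {z : ℂ} (hz : ‖z‖ < 1) (x : ℝ) :
    0 < ((1:ℂ) - z * Complex.exp (-(x:ℂ) * Complex.I)).re := by
  have h1 : ‖z * Complex.exp (-(x:ℂ) * Complex.I)‖ < 1 := by
    rw [norm_mul, abs_exp_neg_xI, mul_one]
    simpa using hz
  have h2 := Complex.re_le_norm (z * Complex.exp (-(x:ℂ) * Complex.I))
  simp only [Complex.sub_re, Complex.one_re]
  linarith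

lemma one_sub_slit {z : ℂ} (hz : ‖z‖ < 1) (x : ℝ) :
    (1:ℂ) - z * Complex.exp (-(x:ℂ) * Complex.I) ∈ Complex.slitPlane :=
  Complex.mem_slitPlane_iff.mpr (Or.inl (re_pos_one_sub hz x))

lemma one_sub_ne {z : ℂ} (hz : ‖z‖ < 1) (x : ℝ) :
    (1:ℂ) - z * Complex.exp (-(x:ℂ) * Complex.I) ≠ 0 := by
  intro h
  have := re_pos_one_sub hz x
  rw [h] at this
  simp at this

lemma hasDerivAt_G (z : ℂ) (x : ℝ) :
    HasDerivAt (fun x : ℝ => (1:ℂ) - z * Complex.exp (-(x:ℂ) * Complex.I))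
      (z * Complex.I * Complex.exp (-(x:ℂ) * Complex.I)) x := by
  have h0 : HasDerivAt (fun x : ℝ => ((x:ℝ):ℂ)) 1 x := by
    simpa using (hasDerivAt_id x).ofReal_comp
  have h1 : HasDerivAt (fun x : ℝ => -(x:ℂ) * Complex.I) (-Complex.I) x := by
    have := (h0.neg).mul_const Complex.I
    simpa using this
  have h2 := h1.cexp
  have h3 := (h2.const_mul z).const_sub 1
  refine h3.congr_deriv ?_
  ring

lemma szK_cont {z : ℂ} (hz : ‖z‖ < 1) : Continuous (szK z) := by
  have hE : Continuous fun x : ℝ => Complex.exp ((x:ℂ) * Complex.I) :=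
    (Complex.continuous_ofReal.mul continuous_const).cexp
  exact (hE.add continuous_const).div (hE.sub continuous_const) fun x => denom_ne hz x

lemma exp_neg_two_pi : Complex.exp (-(((2 * Real.pi : ℝ)):ℂ) * Complex.I) = 1 := by
  rw [show -(((2 * Real.pi : ℝ)):ℂ) * Complex.I = -(2 * Real.pi * Complex.I) by push_cast; ring,
    Complex.exp_neg, Complex.exp_two_pi_mul_I, inv_one]

lemma szK_eq {z : ℂ} (hz : ‖z‖ < 1) (x : ℝ) :
    szK z x = 1 - 2 * Complex.I *
      (z * Complex.I * Complex.exp (-(x:ℂ) * Complex.I) /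
        (1 - z * Complex.exp (-(x:ℂ) * Complex.I))) := by
  have he : Complex.exp (-(x:ℂ) * Complex.I) = (Complex.exp ((x:ℂ) * Complex.I))⁻¹ := by
    rw [neg_mul, Complex.exp_neg]
  have h1 := denom_ne hz x
  have h2 := one_sub_ne hz x
  rw [he] at h2 ⊢
  have hE : Complex.exp ((x:ℂ) * Complex.I) ≠ 0 := Complex.exp_ne_zero _
  rw [szK]
  have h2' : Complex.exp ((x:ℂ) * Complex.I) - z ≠ 0 := h1
  field_simp
  ring_nf
  linear_combination (2 * z) * Complex.I_sq

lemma keyA {z : ℂ} (hz : ‖z‖ < 1) :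
    ∫ x in (0:ℝ)..(2 * Real.pi), szK z x = ((2 * Real.pi : ℝ) : ℂ) := by
  have hF : ∀ x ∈ Set.uIcc (0:ℝ) (2 * Real.pi),
      HasDerivAt (fun x : ℝ => ((x:ℝ):ℂ) - 2 * Complex.I *
        Complex.log (1 - z * Complex.exp (-(x:ℂ) * Complex.I))) (szK z x) x := by
    intro x _
    have hlog := (hasDerivAt_G z x).clog_real (one_sub_slit hz x)
    have h0 : HasDerivAt (fun x : ℝ => ((x:ℝ):ℂ)) 1 x := by
      simpa using (hasDerivAt_id x).ofReal_comp
    have := h0.sub (hlog.const_mul (2 * Complex.I))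
    rw [szK_eq hz x]
    exact this
  have hint : IntervalIntegrable (szK z) MeasureTheory.volume 0 (2 * Real.pi) :=
    (szK_cont hz).intervalIntegrable _ _
  rw [intervalIntegral.integral_eq_sub_of_hasDerivAt hF hint]
  rw [exp_neg_two_pi]
  simp

lemma cos_coe (x : ℝ) : ((Real.cos x : ℝ) : ℂ) =
    (Complex.exp ((x:ℂ) * Complex.I) + Complex.exp (-(x:ℂ) * Complex.I)) / 2 := by
  rw [Complex.ofReal_cos, Complex.cos]

lemma keyB {z : ℂ} (hz : ‖z‖ < 1) :
    ∫ x in (0:ℝ)..(2 * Real.pi), szK z x * ((Real.cos x : ℝ) : ℂ)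
      = ((2 * Real.pi : ℝ) : ℂ) * z := by
  rcases eq_or_ne z 0 with rfl | hz0
  · have : ∀ x : ℝ, szK 0 x * ((Real.cos x : ℝ) : ℂ) = ((Real.cos x : ℝ) : ℂ) := by
      intro x
      rw [szK]
      simp [Complex.exp_ne_zero]
    rw [intervalIntegral.integral_congr fun x _ => this x]
    rw [intervalIntegral.integral_ofReal]
    simp [integral_cos]
  · set F : ℝ → ℂ := fun x => ((Real.sin x : ℝ) : ℂ) - Complex.I * Complex.exp (-(x:ℂ) * Complex.I)
      - ((x:ℝ):ℂ) / z + (z + 1/z) * (((x:ℝ):ℂ) -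
        Complex.I * Complex.log (1 - z * Complex.exp (-(x:ℂ) * Complex.I))) with hFdef
    have hF : ∀ x ∈ Set.uIcc (0:ℝ) (2 * Real.pi),
        HasDerivAt F (szK z x * ((Real.cos x : ℝ) : ℂ)) x := by
      intro x _
      have h0 : HasDerivAt (fun x : ℝ => ((x:ℝ):ℂ)) 1 x := by
        simpa using (hasDerivAt_id x).ofReal_comp
      have hsin : HasDerivAt (fun x : ℝ => ((Real.sin x : ℝ) : ℂ)) ((Real.cos x : ℝ) : ℂ) x :=
        (Real.hasDerivAt_sin x).ofReal_comp
      have h1 : HasDerivAt (fun x : ℝ => -(x:ℂ) * Complex.I) (-Complex.I) x := by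
        simpa using (h0.neg).mul_const Complex.I
      have hexp := h1.cexp
      have hlog := (hasDerivAt_G z x).clog_real (one_sub_slit hz x)
      have hT := ((hsin.sub (hexp.const_mul Complex.I)).sub (h0.div_const z)).add
        (((h0.sub (hlog.const_mul Complex.I))).const_mul (z + 1/z))
      refine hT.congr_deriv ?_
      symm
      -- value identity
      have h1' := denom_ne hz x
      have h2 := one_sub_ne hz x
      have hE : Complex.exp ((x:ℂ) * Complex.I) ≠ 0 := Complex.exp_ne_zero _
      have e1 : Complex.I * (Complex.exp (-(x:ℂ) * Complex.I) * -Complex.I)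
          = Complex.exp (-(x:ℂ) * Complex.I) := by
        linear_combination (-(Complex.exp (-(x:ℂ) * Complex.I))) * Complex.I_sq
      have e2 : Complex.I * (z * Complex.I * Complex.exp (-(x:ℂ) * Complex.I) /
            (1 - z * Complex.exp (-(x:ℂ) * Complex.I)))
          = -(z * Complex.exp (-(x:ℂ) * Complex.I) /
            (1 - z * Complex.exp (-(x:ℂ) * Complex.I))) := by
        linear_combination (z * Complex.exp (-(x:ℂ) * Complex.I) /
          (1 - z * Complex.exp (-(x:ℂ) * Complex.I))) * Complex.I_sq
      rw [e1, e2]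
      have he : Complex.exp (-(x:ℂ) * Complex.I) = (Complex.exp ((x:ℂ) * Complex.I))⁻¹ := by
        rw [neg_mul, Complex.exp_neg]
      rw [szK, cos_coe]
      rw [he]
      have hd : (1:ℂ) - z * (Complex.exp ((x:ℂ) * Complex.I))⁻¹
          = (Complex.exp ((x:ℂ) * Complex.I))⁻¹ * (Complex.exp ((x:ℂ) * Complex.I) - z) := by
        field_simp
      rw [hd, show z * (Complex.exp ((x:ℂ) * Complex.I))⁻¹
          = (Complex.exp ((x:ℂ) * Complex.I))⁻¹ * z from mul_comm _ _,
        mul_div_mul_left _ _ (inv_ne_zero hE)]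
      field_simp [hE, hz0, h1']
      ring
    have hint : IntervalIntegrable (fun x => szK z x * ((Real.cos x : ℝ) : ℂ))
        MeasureTheory.volume 0 (2 * Real.pi) :=
      ((szK_cont hz).mul (Complex.continuous_ofReal.comp Real.continuous_cos)).intervalIntegrable _ _
    rw [intervalIntegral.integral_eq_sub_of_hasDerivAt hF hint]
    rw [hFdef]
    simp only [exp_neg_two_pi]
    simp [Real.sin_two_pi]
    field_simp
    ring

lemma mainLem (w : ℝ → ℝ) (hw : ∀ x, 0 < w x)
    (hlog : IntervalIntegrable (fun x => Real.log (w x)) MeasureTheory.volume 0 (2 * Real.pi))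
    (c t : ℝ) (hc : 0 < c) {z : ℂ} (hz : ‖z‖ < 1) :
    Complex.exp ((1 / 2) * (((2 * Real.pi)⁻¹ : ℝ) : ℂ) *
      ∫ x in (0:ℝ)..(2 * Real.pi), szK z x *
        ((Real.log (c * Real.exp (2 * t * Real.cos x) * w x) : ℝ) : ℂ))
    = (Real.sqrt c : ℂ) * Complex.exp ((t : ℂ) * z) *
      Complex.exp ((1 / 2) * (((2 * Real.pi)⁻¹ : ℝ) : ℂ) *
        ∫ x in (0:ℝ)..(2 * Real.pi), szK z x * ((Real.log (w x) : ℝ) : ℂ)) := by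
  have hint1 : IntervalIntegrable (szK z) MeasureTheory.volume 0 (2 * Real.pi) :=
    (szK_cont hz).intervalIntegrable _ _
  have hint2 : IntervalIntegrable (fun x => szK z x * ((Real.cos x : ℝ) : ℂ))
      MeasureTheory.volume 0 (2 * Real.pi) :=
    ((szK_cont hz).mul (Complex.continuous_ofReal.comp Real.continuous_cos)).intervalIntegrable _ _
  have hint3 : IntervalIntegrable (fun x => szK z x * ((Real.log (w x) : ℝ) : ℂ))
      MeasureTheory.volume 0 (2 * Real.pi) := by
    have hcoe : IntervalIntegrable (fun x => ((Real.log (w x) : ℝ) : ℂ))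
        MeasureTheory.volume 0 (2 * Real.pi) := by
      rw [intervalIntegrable_iff] at hlog ⊢
      exact Complex.ofRealCLM.integrable_comp hlog
    exact hcoe.continuousOn_mul (szK_cont hz).continuousOn
  have hsplit : ∀ x : ℝ, szK z x * ((Real.log (c * Real.exp (2 * t * Real.cos x) * w x) : ℝ) : ℂ)
      = ((Real.log c : ℝ) : ℂ) * szK z x + ((2 * t : ℝ) : ℂ) * (szK z x * ((Real.cos x : ℝ) : ℂ))
        + szK z x * ((Real.log (w x) : ℝ) : ℂ) := by
    intro x
    rw [Real.log_mul (by positivity) (hw x).ne', Real.log_mul hc.ne' (Real.exp_pos _).ne',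
      Real.log_exp]
    push_cast
    ring
  rw [intervalIntegral.integral_congr fun x _ => hsplit x]
  rw [intervalIntegral.integral_add (((hint1.const_mul _).add (hint2.const_mul _)))
    hint3, intervalIntegral.integral_add (hint1.const_mul _) (hint2.const_mul _),
    intervalIntegral.integral_const_mul, intervalIntegral.integral_const_mul, keyA hz, keyB hz]
  have hsqrt : (Real.sqrt c : ℂ) = Complex.exp (((Real.log c * (1/2) : ℝ)) : ℂ) := by
    rw [Real.sqrt_eq_rpow, Real.rpow_def_of_pos hc, Complex.ofReal_exp]
  rw [hsqrt, ← Complex.exp_add, ← Complex.exp_add]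
  congr 1
  have hpi : ((Real.pi : ℝ) : ℂ) ≠ 0 := Complex.ofReal_ne_zero.mpr Real.pi_ne_zero
  push_cast
  field_simp

theorem stmt18 (w : ℝ → ℝ) (hw : ∀ x, 0 < w x)
    (hlog : IntervalIntegrable (fun x => Real.log (w x)) MeasureTheory.volume 0 (2 * Real.pi))
    (c : ℝ → ℝ) (hc : ∀ t, 0 < c t)
    (hnorm : ∀ t, (2 * Real.pi)⁻¹ *
      ∫ x in (0:ℝ)..(2 * Real.pi), c t * Real.exp (2 * t * Real.cos x) * w x = 1)
    (D : (ℝ → ℝ) → ℂ → ℂ)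
    (hD : ∀ g z, D g z = Complex.exp ((1 / 2) * (((2 * Real.pi)⁻¹ : ℝ) : ℂ) *
      ∫ x in (0:ℝ)..(2 * Real.pi),
        ((Complex.exp ((x : ℂ) * Complex.I) + z) /
            (Complex.exp ((x : ℂ) * Complex.I) - z)) *
          ((Real.log (g x) : ℝ) : ℂ)))
    (t : ℝ) (z : ℂ) (hz : ‖z‖ < 1) :
    D (fun x => c t * Real.exp (2 * t * Real.cos x) * w x) z =
        (Real.sqrt (c t) : ℂ) * Complex.exp ((t : ℂ) * z) * D w z ∧
      D (fun x => c t * Real.exp (2 * t * Real.cos x) * w x) z /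
          D (fun x => c t * Real.exp (2 * t * Real.cos x) * w x) 0 =
        Complex.exp ((t : ℂ) * z) * (D w z / D w 0) := by
  have key : ∀ (u : ℂ), ‖u‖ < 1 →
      D (fun x => c t * Real.exp (2 * t * Real.cos x) * w x) u
        = (Real.sqrt (c t) : ℂ) * Complex.exp ((t : ℂ) * u) * D w u := by
    intro u hu
    rw [hD, hD]
    have h := mainLem w hw hlog (c t) t (hc t) hu
    simpa only [szK] using h
  have h0 : ‖(0:ℂ)‖ < 1 := by simp
  refine ⟨key z hz, ?_⟩
  rw [key z hz, key 0 h0]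
  have hD0 : D w 0 ≠ 0 := by rw [hD]; exact Complex.exp_ne_zero _
  have hs : (Real.sqrt (c t) : ℂ) ≠ 0 :=
    Complex.ofReal_ne_zero.mpr (Real.sqrt_pos.mpr (hc t)).ne'
  rw [mul_zero, Complex.exp_zero, mul_one]
  field_simp
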